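/- arXiv:2602.13225 — 5 statements merged into one kernel-verified Lean document; each statement's English description precedes it below -/
import Mathlib

section
/- Let f : [0,1] → [0,∞) be continuous and p : [0,1] → (1,∞) continuous with 1 < p⁻ ≤ p(t) ≤ p⁺ for all t, and let q satisfy 1 ≤ q < p⁻. Then ∫₀¹ (f(t))^(p(t)/q) dt ≥ 2^(1 - p⁺/q) · ∫₀¹ (f(t))^(p⁻/q) dt − 1. -/
open Set

theorem stmt1 (f p : ℝ → ℝ) (pm pp q : ℝ)
    (hfc : ContinuousOn f (Icc 0 1)) (hf : ∀ t ∈ Icc (0:ℝ) 1, 0 ≤ f t)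
    (hp : Continuous p)
    (h1 : 1 < pm) (hpb : ∀ t ∈ Icc (0:ℝ) 1, pm ≤ p t ∧ p t ≤ pp)
    (hq1 : 1 ≤ q) (hq2 : q < pm) :
    (∫ t in (0:ℝ)..1, f t ^ (p t / q)) ≥
      (2:ℝ) ^ (1 - pp / q) * (∫ t in (0:ℝ)..1, f t ^ (pm / q)) - 1 := by
  have hq0 : 0 < q := lt_of_lt_of_le one_pos hq1
  have hc1 : (2:ℝ) ^ (1 - pp / q) ≤ 1 := by
    apply Real.rpow_le_one_of_one_le_of_nonpos one_le_two
    have hppm : pm ≤ pp := by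
      have := hpb 0 (by norm_num); linarith [(hpb 0 (by norm_num)).1, (hpb 0 (by norm_num)).2]
    have : 1 < pp / q := (one_lt_div hq0).2 (lt_of_lt_of_le hq2 hppm)
    linarith
  have hc0 : (0:ℝ) ≤ (2:ℝ) ^ (1 - pp / q) := Real.rpow_nonneg (by norm_num) _
  set c : ℝ := (2:ℝ) ^ (1 - pp / q) with hc
  -- pointwise inequality
  have key : ∀ t ∈ Icc (0:ℝ) 1, c * f t ^ (pm / q) - 1 ≤ f t ^ (p t / q) := by
    intro t ht
    have hx0 : 0 ≤ f t := hf t ht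
    have hpt := hpb t ht
    rcases le_or_gt (f t) 1 with hx1 | hx1
    · have h1' : f t ^ (pm / q) ≤ 1 := Real.rpow_le_one hx0 hx1 (by positivity)
      have : c * f t ^ (pm / q) ≤ 1 := by
        calc c * f t ^ (pm / q) ≤ 1 * 1 :=
          mul_le_mul hc1 h1' (Real.rpow_nonneg hx0 _) one_pos.le
        _ = 1 := by ring
      have := Real.rpow_nonneg hx0 (p t / q)
      linarith
    · have hmono : f t ^ (pm / q) ≤ f t ^ (p t / q) :=
        Real.rpow_le_rpow_of_exponent_le hx1.le (by
          exact by gcongr; exact hpt.1)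
      have : c * f t ^ (pm / q) ≤ f t ^ (pm / q) := by
        nlinarith [Real.rpow_nonneg hx0 (pm / q)]
      linarith
  -- continuity of the integrands on Icc 0 1
  have hpos : ∀ t ∈ Icc (0:ℝ) 1, f t ≠ 0 ∨ 0 < p t / q := by
    intro t ht; right; exact div_pos (by linarith [(hpb t ht).1]) hq0
  have hcont1 : ContinuousOn (fun t => f t ^ (p t / q)) (Icc 0 1) :=
    ContinuousOn.rpow hfc ((hp.div_const q).continuousOn) hpos
  have hcont2 : ContinuousOn (fun t => f t ^ (pm / q)) (Icc 0 1) :=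
    ContinuousOn.rpow hfc continuousOn_const (fun t ht => Or.inr (by positivity))
  have huIcc : uIcc (0:ℝ) 1 = Icc 0 1 := uIcc_of_le (by norm_num)
  have hi1 : IntervalIntegrable (fun t => f t ^ (p t / q)) MeasureTheory.volume 0 1 :=
    (hcont1.mono (by rw [huIcc])).intervalIntegrable
  have hi2 : IntervalIntegrable (fun t => f t ^ (pm / q)) MeasureTheory.volume 0 1 :=
    (hcont2.mono (by rw [huIcc])).intervalIntegrable
  have hi3 : IntervalIntegrable (fun t => c * f t ^ (pm / q) - 1) MeasureTheory.volume 0 1 :=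
    (hi2.const_mul c).sub intervalIntegrable_const
  have hmono := intervalIntegral.integral_mono_on (by norm_num : (0:ℝ) ≤ 1) hi3 hi1 key
  have heq : (∫ t in (0:ℝ)..1, (c * f t ^ (pm / q) - 1)) =
      c * (∫ t in (0:ℝ)..1, f t ^ (pm / q)) - 1 := by
    rw [intervalIntegral.integral_sub (hi2.const_mul c) intervalIntegrable_const,
      intervalIntegral.integral_const_mul]
    simp
  rw [heq] at hmono
  exact hmono
end

section
/- Let b ∈ L¹((0,1]) with b ≥ 0 a.e. and ∫₀¹ b(1−s) ds > 0, let p : [0,1] → ℝ be continuous with 0 < p⁻ ≤ p(t) ≤ p⁺ < ∞, and let u : [0,1] → [0,∞) be continuous with ∫₀¹ b(1−s)(u(s))^(p(s)) ds = ρ for some ρ > 0. Then ‖u‖∞ ≥ (ρ / ∫₀¹ b(1−s) ds)^(1/p⁺) + ε(ρ,b), where ε(ρ,b) := (ρ/∫₀¹ b(1−s) ds)^(1/p⁻) − (ρ/∫₀¹ b(1−s) ds)^(1/p⁺) if (ρ/∫₀¹ b(1−s) ds)^(1/p⁺) < 1, and ε(ρ,b) := 0 otherwise. -/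
open Set MeasureTheory

theorem stmt2 (b p u : ℝ → ℝ) (pm pp ρ M : ℝ)
    (hb : ∀ s ∈ Ioc (0:ℝ) 1, 0 ≤ b s)
    (hbint : IntervalIntegrable (fun s => b (1 - s)) volume 0 1)
    (hB : 0 < ∫ s in (0:ℝ)..1, b (1 - s))
    (hp : Continuous p) (hpm : 0 < pm)
    (hpb : ∀ t ∈ Icc (0:ℝ) 1, pm ≤ p t ∧ p t ≤ pp)
    (huc : ContinuousOn u (Icc 0 1)) (hun : ∀ t ∈ Icc (0:ℝ) 1, 0 ≤ u t)
    (hM : IsGreatest (u '' Icc (0:ℝ) 1) M)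
    (hρ : 0 < ρ)
    (heq : (∫ s in (0:ℝ)..1, b (1 - s) * u s ^ p s) = ρ) :
    M ≥ (ρ / ∫ s in (0:ℝ)..1, b (1 - s)) ^ (1 / pp) +
      (if (ρ / ∫ s in (0:ℝ)..1, b (1 - s)) ^ (1 / pp) < 1 then
        (ρ / ∫ s in (0:ℝ)..1, b (1 - s)) ^ (1 / pm)
          - (ρ / ∫ s in (0:ℝ)..1, b (1 - s)) ^ (1 / pp)
      else 0) := by
  set B : ℝ := ∫ s in (0:ℝ)..1, b (1 - s) with hBdef
  set r : ℝ := ρ / B with hrdef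
  have hr : 0 < r := div_pos hρ hB
  have hpp : 0 < pp := hpm.trans_le (le_trans (hpb 0 (by norm_num)).1 (hpb 0 (by norm_num)).2)
  -- M is an upper bound and nonnegative
  have hMb : ∀ t ∈ Icc (0:ℝ) 1, u t ≤ M := fun t ht => hM.2 (mem_image_of_mem u ht)
  have hM0 : 0 ≤ M := by
    obtain ⟨t, ht, htu⟩ := hM.1
    exact htu ▸ hun t ht
  -- continuity of the power
  have hcont : ContinuousOn (fun s => u s ^ p s) (Icc (0:ℝ) 1) := by
    apply huc.rpow (hp.continuousOn)
    intro x hx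
    exact Or.inr (hpm.trans_le (hpb x hx).1)
  have hint : IntervalIntegrable (fun s => b (1 - s) * u s ^ p s) volume 0 1 := by
    apply hbint.mul_continuousOn
    rwa [uIcc_of_le (zero_le_one)]
  -- key estimate
  have main : ∀ q : ℝ, (∀ s ∈ Icc (0:ℝ) 1, u s ^ p s ≤ M ^ q) → ρ ≤ B * M ^ q := by
    intro q hq
    rw [← heq]
    have h1 : (∫ s in (0:ℝ)..1, b (1 - s) * u s ^ p s)
        ≤ ∫ s in (0:ℝ)..1, b (1 - s) * M ^ q := by
      apply intervalIntegral.integral_mono_ae_restrict zero_le_one hint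
        (hbint.mul_const _)
      have hne : ∀ᵐ x : ℝ ∂(volume.restrict (Icc (0:ℝ) 1)), x ≠ 1 := by
        refine (ae_restrict_iff' measurableSet_Icc).2 ?_
        have : (volume : Measure ℝ) {x : ℝ | ¬ (x ∈ Icc (0:ℝ) 1 → x ≠ 1)} = 0 := by
          refine measure_mono_null ?_ (measure_singleton (1:ℝ))
          intro x hx
          simp only [mem_setOf_eq, Classical.not_imp, not_not] at hx
          exact hx.2
        exact ae_iff.2 this
      have hmem : ∀ᵐ x : ℝ ∂(volume.restrict (Icc (0:ℝ) 1)), x ∈ Icc (0:ℝ) 1 :=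
        ae_restrict_mem measurableSet_Icc
      filter_upwards [hne, hmem] with x hx1 hxI
      have hbx : 0 ≤ b (1 - x) := by
        apply hb
        constructor
        · have := lt_of_le_of_ne hxI.2 hx1
          linarith
        · linarith [hxI.1]
      exact mul_le_mul_of_nonneg_left (hq x hxI) hbx
    calc (∫ s in (0:ℝ)..1, b (1 - s) * u s ^ p s)
        ≤ ∫ s in (0:ℝ)..1, b (1 - s) * M ^ q := h1
      _ = B * M ^ q := by rw [intervalIntegral.integral_mul_const]
  -- M > 0
  have hMpos : 0 < M := by
    rcases hM0.lt_or_eq with h | h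
    · exact h
    · exfalso
      have hz : ∀ s ∈ Icc (0:ℝ) 1, u s ^ p s ≤ M ^ pp := by
        intro s hs
        have hu0 : u s = 0 := le_antisymm (h ▸ hMb s hs) (hun s hs)
        rw [hu0, ← h, Real.zero_rpow (ne_of_gt (hpm.trans_le (hpb s hs).1)),
          Real.zero_rpow (ne_of_gt hpp)]
      have := main pp hz
      rw [← h, Real.zero_rpow (ne_of_gt hpp), mul_zero] at this
      linarith
  -- extraction: from r ≤ M ^ q, q > 0 we get r ^ (1/q) ≤ M
  have extract : ∀ q : ℝ, 0 < q → ρ ≤ B * M ^ q → r ^ (1 / q) ≤ M := by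
    intro q hq hle
    have h1 : r ≤ M ^ q := (div_le_iff₀' hB).2 hle
    have h2 : r ^ (1 / q) ≤ (M ^ q) ^ (1 / q) :=
      Real.rpow_le_rpow hr.le h1 (by positivity)
    rwa [← Real.rpow_mul hMpos.le, mul_one_div, div_self (ne_of_gt hq),
      Real.rpow_one] at h2
  rcases le_or_gt 1 M with hM1 | hM1
  · -- M ≥ 1
    have hbound : ∀ s ∈ Icc (0:ℝ) 1, u s ^ p s ≤ M ^ pp := by
      intro s hs
      calc u s ^ p s ≤ M ^ p s :=
            Real.rpow_le_rpow (hun s hs) (hMb s hs)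
              (le_of_lt (hpm.trans_le (hpb s hs).1))
        _ ≤ M ^ pp := Real.rpow_le_rpow_of_exponent_le hM1 (hpb s hs).2
    have hkey : r ^ (1 / pp) ≤ M := extract pp hpp (main pp hbound)
    by_cases hc : r ^ (1 / pp) < 1
    · rw [if_pos hc]
      have hr1 : r < 1 := by
        by_contra hr1
        push_neg at hr1
        exact absurd (Real.one_le_rpow hr1 (by positivity)) (not_le.2 hc)
      have : r ^ (1 / pm) ≤ 1 := Real.rpow_le_one hr.le hr1.le (by positivity)
      linarith
    · rw [if_neg hc]
      linarith
  · -- M < 1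
    have hbound : ∀ s ∈ Icc (0:ℝ) 1, u s ^ p s ≤ M ^ pm := by
      intro s hs
      calc u s ^ p s ≤ M ^ p s :=
            Real.rpow_le_rpow (hun s hs) (hMb s hs)
              (le_of_lt (hpm.trans_le (hpb s hs).1))
        _ ≤ M ^ pm := Real.rpow_le_rpow_of_exponent_ge hMpos hM1.le (hpb s hs).1
    have hkey : r ^ (1 / pm) ≤ M := extract pm hpm (main pm hbound)
    have hr1 : r < 1 := by
      have h1 : r ≤ M ^ pm := (div_le_iff₀' hB).2 (main pm hbound)
      have h2 : M ^ pm < 1 := Real.rpow_lt_one hMpos.le hM1 hpm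
      linarith
    have hc : r ^ (1 / pp) < 1 := Real.rpow_lt_one hr.le hr1 (by positivity)
    rw [if_pos hc]
    linarith
end

section
/- For every real a > 1, a·ln(a) + (a+1)·ln(2/(a+1)) > 0. -/
theorem stmt5 (a : ℝ) (ha : 1 < a) :
    0 < a * Real.log a + (a + 1) * Real.log (2 / (a + 1)) := by
  have h0 : (0:ℝ) < a + 1 := by linarith
  have key := Real.strictConvexOn_mul_log.2 (Set.mem_Ici.2 (by norm_num : (0:ℝ) ≤ 1))
    (Set.mem_Ici.2 (by linarith : (0:ℝ) ≤ a)) (ne_of_lt ha) (by norm_num : (0:ℝ) < 1/2)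
    (by norm_num : (0:ℝ) < 1/2) (by norm_num)
  simp only [smul_eq_mul, Real.log_one, mul_one, mul_zero] at key
  have hmid : (1/2 : ℝ) + (1/2) * a = (a+1)/2 := by ring
  rw [hmid] at key
  have hlog : Real.log (2 / (a + 1)) = - Real.log ((a+1)/2) := by
    rw [← Real.log_inv]; norm_num
  rw [hlog]
  have : (a+1)/2 * Real.log ((a+1)/2) < 1/2 * (a * Real.log a) := by linarith
  nlinarith [this]
end

section
/- For every real b with 0 < b < 1, b·ln(b) + (b+1)·ln(2/(b+1)) > 0. -/
open Real

private noncomputable def g6 : ℝ → ℝ := fun x => x * Real.log x + (x + 1) * (Real.log 2 - Real.log (x + 1))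

private lemma g6_deriv {x : ℝ} (hx : 0 < x) :
    HasDerivAt g6 (Real.log x + Real.log 2 - Real.log (x + 1)) x := by
  have hne : x + 1 ≠ 0 := by linarith
  have h1 : HasDerivAt (fun y : ℝ => y * Real.log y) (Real.log x + 1) x := by
    have := (hasDerivAt_id x).mul (Real.hasDerivAt_log hx.ne')
    refine this.congr_deriv ?_
    simp [hx.ne']
  have hlog : HasDerivAt (fun y : ℝ => Real.log (y + 1)) (1 / (x + 1)) x := by
    have := (Real.hasDerivAt_log hne).comp x ((hasDerivAt_id x).add_const 1)
    simpa [Function.comp_def] using this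
  have h2 : HasDerivAt (fun y : ℝ => (y + 1) * (Real.log 2 - Real.log (y + 1)))
      (1 * (Real.log 2 - Real.log (x + 1)) + (x + 1) * (-(1 / (x + 1)))) x :=
    ((hasDerivAt_id x).add_const 1).mul (hlog.const_sub _)
  have := h1.add h2
  refine this.congr_deriv ?_
  rw [mul_neg, mul_one_div_cancel hne]
  ring

private lemma g6_anti : StrictAntiOn g6 (Set.Icc 0 1) := by
  apply strictAntiOn_of_deriv_neg (convex_Icc 0 1)
  · apply ContinuousOn.add
    · exact Real.continuous_mul_log.continuousOn
    · apply ContinuousOn.mul (by fun_prop)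
      apply ContinuousOn.sub continuousOn_const
      apply ContinuousOn.log (by fun_prop)
      intro x hx
      have := hx.1
      linarith
  · intro x hx
    rw [interior_Icc] at hx
    obtain ⟨hx0, hx1⟩ := hx
    rw [(g6_deriv hx0).deriv]
    have h2x : Real.log x + Real.log 2 = Real.log (2 * x) := by
      rw [Real.log_mul two_ne_zero hx0.ne']; ring
    have : Real.log (2 * x) < Real.log (x + 1) :=
      Real.log_lt_log (by linarith) (by linarith)
    linarith [h2x]

theorem stmt6 (b : ℝ) (hb0 : 0 < b) (hb1 : b < 1) :
    0 < b * Real.log b + (b + 1) * Real.log (2 / (b + 1)) := by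
  have hkey : g6 1 < g6 b :=
    g6_anti (Set.mem_Icc.mpr ⟨hb0.le, hb1.le⟩) (Set.mem_Icc.mpr ⟨zero_le_one, le_refl 1⟩) hb1
  have hg1 : g6 1 = 0 := by norm_num [g6]
  have hgb : g6 b = b * Real.log b + (b + 1) * Real.log (2 / (b + 1)) := by
    rw [g6, Real.log_div two_ne_zero (by linarith)]
  rw [hg1, hgb] at hkey
  exact hkey
end

section
/- For all real a > 0 it holds that a·ln(a) + (a+1)·ln(2/(a+1)) ≥ 0, with equality if and only if a = 1. -/
lemma key7 (a : ℝ) (ha : 0 < a) (hne : a ≠ 1) :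
    0 < a * Real.log a + (a + 1) * Real.log (2 / (a + 1)) := by
  have ha1 : (0:ℝ) < a + 1 := by linarith
  have h := Real.strictConvexOn_mul_log.2 (le_of_lt ha)
      (by norm_num : (1:ℝ) ∈ Set.Ici (0:ℝ)) hne
      (by norm_num : (0:ℝ) < 1/2) (by norm_num : (0:ℝ) < 1/2) (by norm_num)
  simp only [smul_eq_mul, Real.log_one, mul_one, mul_zero, add_zero] at h
  have e : (1/2)*a + 1/2 = (a+1)/2 := by ring
  rw [show (1:ℝ)/2 * a + 1/2 = (a+1)/2 by ring, Real.log_div (by positivity) two_ne_zero] at h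
  rw [Real.log_div two_ne_zero (by positivity)]
  nlinarith [h]

theorem stmt7 (a : ℝ) (ha : 0 < a) :
    0 ≤ a * Real.log a + (a + 1) * Real.log (2 / (a + 1)) ∧
      (a * Real.log a + (a + 1) * Real.log (2 / (a + 1)) = 0 ↔ a = 1) := by
  by_cases hne : a = 1
  · subst hne; norm_num
  · have h := key7 a ha hne
    exact ⟨le_of_lt h, by constructor <;> intro h2 <;> [linarith; exact absurd h2 hne]⟩
end
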